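/- Let E be a finite-dimensional real inner product space, p : E × ℝ₊ → E with p(·,μ) differentiable for μ > 0 and ‖p(z,μ) - Π(z)‖ ≤ Cμ for all z, μ. If there exist ξ > 1 and constants such that ‖D_z p(z,μ) - T*‖ ≤ K‖(z - z*, μ)‖^{ξ-1} near (z*,0), then ‖Π(z* + h) - Π(z*) - T*[h]‖ = O(‖h‖^ξ) as h → 0. -/
import Mathlib


theorem stmt_6 {E : Type*} [NormedAddCommGroup E] [InnerProductSpace ℝ E]
    [FiniteDimensional ℝ E]
    (p : E → ℝ → E) (Pi : E → E) (C : ℝ) (zs : E) (T : E →L[ℝ] E) (ξ : ℝ) (hξ : 1 < ξ)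
    (hdiff : ∀ μ : ℝ, 0 < μ → Differentiable ℝ (fun z => p z μ))
    (hunif : ∀ z : E, ∀ μ : ℝ, 0 < μ → ‖p z μ - Pi z‖ ≤ C * μ)
    (hrate : ∃ K δ₀ : ℝ, 0 < δ₀ ∧ ∀ z : E, ∀ μ : ℝ, 0 < μ → ‖z - zs‖ < δ₀ → μ < δ₀ →
      ‖fderiv ℝ (fun w => p w μ) z - (T : E →L[ℝ] E)‖
        ≤ K * ‖((z - zs, μ) : E × ℝ)‖ ^ (ξ - 1)) :
    ∃ C' δ : ℝ, 0 < δ ∧ ∀ h : E, ‖h‖ < δ →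
      ‖Pi (zs + h) - Pi zs - T h‖ ≤ C' * ‖h‖ ^ ξ := by
  obtain ⟨K, δ₀, hδ₀, hK⟩ := hrate
  have hC : 0 ≤ C := by
    have h1 := hunif 0 1 one_pos
    have h2 := norm_nonneg (p 0 1 - Pi 0)
    linarith
  refine ⟨2 * C + max K 0, min 1 δ₀, lt_min one_pos hδ₀, ?_⟩
  intro h hh
  rcases eq_or_ne h 0 with rfl | hne
  · simp [Real.zero_rpow (by linarith : ξ ≠ 0)]
  · have hr : 0 < ‖h‖ := norm_pos_iff.mpr hne
    have hr1 : ‖h‖ < 1 := lt_of_lt_of_le hh (min_le_left _ _)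
    have hrδ : ‖h‖ < δ₀ := lt_of_lt_of_le hh (min_le_right _ _)
    set μ := ‖h‖ ^ ξ with hμdef
    have hμ : 0 < μ := Real.rpow_pos_of_pos hr _
    have hμr : μ ≤ ‖h‖ := by
      calc μ ≤ ‖h‖ ^ (1 : ℝ) :=
            Real.rpow_le_rpow_of_exponent_ge hr hr1.le (by linarith)
        _ = ‖h‖ := Real.rpow_one _
    have hμδ : μ < δ₀ := lt_of_le_of_lt hμr hrδ
    have hmv : ‖p (zs + h) μ - p zs μ - T h‖ ≤ (max K 0 * ‖h‖ ^ (ξ - 1)) * ‖h‖ := by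
      have := (convex_closedBall zs ‖h‖).norm_image_sub_le_of_norm_fderiv_le'
        (f := fun w => p w μ) (φ := T) (x := zs) (y := zs + h)
        (fun x _ => (hdiff μ hμ).differentiableAt)
        (fun x hx => by
          have hx' : ‖x - zs‖ ≤ ‖h‖ := by
            simpa [dist_eq_norm] using Metric.mem_closedBall.mp hx
          have hb : ‖((x - zs, μ) : E × ℝ)‖ ≤ ‖h‖ := by
            rw [Prod.norm_def]
            exact max_le hx' (by rw [Real.norm_eq_abs, abs_of_pos hμ]; exact hμr)
          calc ‖fderiv ℝ (fun w => p w μ) x - (T : E →L[ℝ] E)‖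
              ≤ K * ‖((x - zs, μ) : E × ℝ)‖ ^ (ξ - 1) :=
                hK x μ hμ (lt_of_le_of_lt hx' hrδ) hμδ
            _ ≤ max K 0 * ‖((x - zs, μ) : E × ℝ)‖ ^ (ξ - 1) := by
                apply mul_le_mul_of_nonneg_right (le_max_left _ _)
                positivity
            _ ≤ max K 0 * ‖h‖ ^ (ξ - 1) := by
                apply mul_le_mul_of_nonneg_left _ (le_max_right _ _)
                exact Real.rpow_le_rpow (norm_nonneg _) hb (by linarith))
        (Metric.mem_closedBall_self (norm_nonneg h))
        (Metric.mem_closedBall.mpr (by simp [dist_eq_norm]))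
      simpa using this
    have hrw : ‖h‖ ^ (ξ - 1) * ‖h‖ = ‖h‖ ^ ξ := by
      have h3 : ‖h‖ ^ (ξ - 1) * ‖h‖ ^ (1 : ℝ) = ‖h‖ ^ ξ := by
        rw [← Real.rpow_add hr]; ring_nf
      simpa using h3
    have h1 := hunif (zs + h) μ hμ
    have h2 := hunif zs μ hμ
    have key : Pi (zs + h) - Pi zs - T h =
        -(p (zs + h) μ - Pi (zs + h)) + (p (zs + h) μ - p zs μ - T h) + (p zs μ - Pi zs) := by
      abel
    calc ‖Pi (zs + h) - Pi zs - T h‖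
        ≤ ‖p (zs + h) μ - Pi (zs + h)‖ + ‖p (zs + h) μ - p zs μ - T h‖ + ‖p zs μ - Pi zs‖ := by
          rw [key]
          refine le_trans (norm_add_le _ _) ?_
          gcongr
          refine le_trans (norm_add_le _ _) ?_
          simp [norm_sub_rev]
      _ ≤ C * μ + (max K 0 * ‖h‖ ^ (ξ - 1)) * ‖h‖ + C * μ := by gcongr
      _ = (2 * C + max K 0) * ‖h‖ ^ ξ := by rw [mul_assoc, hrw]; ring
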